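/- Let 0 < β < 1, θ ≥ 0, σ > 0, γ > 0, π ≥ 0, δ > 0, ρ > 0, and set φ := (1−β+θ)/(1−β) and δ* := δφ. Suppose c, k, h*, u, λ, μ* : ℝ → ℝ are differentiable and strictly positive and satisfy for all t: (T1) λ = c^{−σ}; (T2) (h*·u/k)^β = (γ(1−β)/δ*)·(λ/μ*); (T3) k' = γ·k^β·(u·h*)^{1−β} − πk − c; (T4) (h*)' = δ*(1−u)h*; (T5) λ' = −λ·βγ·(h*·u/k)^{1−β} + λ(ρ+π); (T6) (μ*)' = μ*(ρ−δ*). Define h(t) := h*(t)^{1/φ} and μ(t) := φ·μ*(t)·h(t)^{φ−1}. Then for all t: u^β = γ(1−β)k^β h^{θ−β}·λ/(δμ); k' = γk^β u^{1−β}h^{1−β+θ} − πk − c; h' = δ(1−u)h; λ' = −λγβu^{1−β}k^{β−1}h^{1−β+θ} + λ(ρ+π); and μ' = μ(ρ−δ) − (μθδ/(1−β))·u. -/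

import Mathlib

/-- Any solution of the transformed Lucas-Uzawa model (first-order conditions
(T1)-(T6)) yields, via h = (h*)^{1/φ} and μ = φ·μ*·h^{φ-1}, a solution of the
first-order conditions of the original Lucas-Uzawa model with externalities. -/
theorem transformed_to_original (β θ σ γ pi δ ρ : ℝ)
    (hβ0 : 0 < β) (hβ1 : β < 1) (hθ : 0 ≤ θ) (hσ : 0 < σ) (hγ : 0 < γ)
    (hpi : 0 ≤ pi) (hδ : 0 < δ) (hρ : 0 < ρ)
    (φ δs : ℝ) (hφ : φ = (1 - β + θ) / (1 - β)) (hδs : δs = δ * φ)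
    (c k hs u lam mus : ℝ → ℝ)
    (hcd : Differentiable ℝ c) (hkd : Differentiable ℝ k)
    (hhd : Differentiable ℝ hs) (hud : Differentiable ℝ u)
    (hld : Differentiable ℝ lam) (hmd : Differentiable ℝ mus)
    (hcpos : ∀ t, 0 < c t) (hkpos : ∀ t, 0 < k t) (hhpos : ∀ t, 0 < hs t)
    (hupos : ∀ t, 0 < u t) (hlpos : ∀ t, 0 < lam t) (hmpos : ∀ t, 0 < mus t)
    (T1 : ∀ t, lam t = c t ^ (-σ))
    (T2 : ∀ t, (hs t * u t / k t) ^ β = γ * (1 - β) / δs * (lam t / mus t))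
    (T3 : ∀ t, deriv k t = γ * k t ^ β * (u t * hs t) ^ (1 - β) - pi * k t - c t)
    (T4 : ∀ t, deriv hs t = δs * (1 - u t) * hs t)
    (T5 : ∀ t, deriv lam t
      = -(lam t) * (β * γ) * (hs t * u t / k t) ^ (1 - β) + lam t * (ρ + pi))
    (T6 : ∀ t, deriv mus t = mus t * (ρ - δs))
    (h μ : ℝ → ℝ)
    (hh : ∀ t, h t = hs t ^ (1 / φ))
    (hμ : ∀ t, μ t = φ * mus t * h t ^ (φ - 1)) :
    (∀ t, u t ^ β = γ * (1 - β) * k t ^ β * h t ^ (θ - β) * lam t / (δ * μ t)) ∧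
    (∀ t, deriv k t
      = γ * k t ^ β * u t ^ (1 - β) * h t ^ (1 - β + θ) - pi * k t - c t) ∧
    (∀ t, deriv h t = δ * (1 - u t) * h t) ∧
    (∀ t, deriv lam t
      = -(lam t) * γ * β * u t ^ (1 - β) * k t ^ (β - 1) * h t ^ (1 - β + θ)
        + lam t * (ρ + pi)) ∧
    (∀ t, deriv μ t = μ t * (ρ - δ) - μ t * θ * δ / (1 - β) * u t) := by

  have h1β : (0:ℝ) < 1 - β := by linarith
  have hφpos : 0 < φ := by rw [hφ]; apply div_pos <;> linarith
  have hφne : φ ≠ 0 := ne_of_gt hφpos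
  have hδspos : 0 < δs := by rw [hδs]; positivity
  have hhpos' : ∀ t, 0 < h t := fun t => by
    rw [hh]; exact Real.rpow_pos_of_pos (hhpos t) _
  have hsh : ∀ t, hs t = h t ^ φ := fun t => by
    rw [hh, ← Real.rpow_mul (hhpos t).le, one_div, inv_mul_cancel₀ hφne,
      Real.rpow_one]
  have hφβ : φ * (1 - β) = 1 - β + θ := by
    rw [hφ]; field_simp
  have hφ1 : (φ - 1) * (1 - β) = θ := by
    rw [hφ]; field_simp; ring
  refine ⟨?_, ?_, ?_, ?_, ?_⟩
  · intro t
    have hT2 := T2 t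
    rw [Real.div_rpow (mul_nonneg (hhpos t).le (hupos t).le) (hkpos t).le,
      Real.mul_rpow (hhpos t).le (hupos t).le] at hT2
    have hkb : (0:ℝ) < k t ^ β := Real.rpow_pos_of_pos (hkpos t) _
    have hhsb : hs t ^ β = h t ^ (φ * β) := by
      rw [hsh, ← Real.rpow_mul (hhpos' t).le]
    have hmusne : mus t ≠ 0 := (hmpos t).ne'
    have e1 : h t ^ (φ * β) * u t ^ β * (δs * mus t)
        = γ * (1 - β) * lam t * k t ^ β := by
      rw [← hhsb]
      field_simp at hT2
      nlinarith [hT2]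
    have hpb : (0:ℝ) < h t ^ (φ * β) := Real.rpow_pos_of_pos (hhpos' t) _
    have hp1 : (0:ℝ) < h t ^ (φ - 1) := Real.rpow_pos_of_pos (hhpos' t) _
    rw [hμ, eq_div_iff (by positivity),
      show θ - β = (φ - 1) + -(φ * β) by nlinarith [hφβ, hφ1],
      Real.rpow_add (hhpos' t), Real.rpow_neg (hhpos' t).le]
    rw [hδs] at e1
    field_simp
    nlinarith [e1, hp1, mul_pos hp1 hpb]
  · intro t
    rw [T3 t, Real.mul_rpow (hupos t).le (hhpos t).le, hsh,
      ← Real.rpow_mul (hhpos' t).le, hφβ]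
    ring
  · intro t
    have hd : HasDerivAt (fun x => hs x ^ (1/φ))
        (deriv hs t * (1/φ) * hs t ^ (1/φ - 1)) t :=
      (hhd t).hasDerivAt.rpow_const (Or.inl (hhpos t).ne')
    have hfun : h = fun x => hs x ^ (1/φ) := funext hh
    rw [hfun, hd.deriv, T4 t]
    rw [show δs * (1 - u t) * hs t * (1/φ) * hs t ^ (1/φ - 1)
        = (δs * (1/φ)) * (1 - u t) * (hs t ^ (1/φ - 1) * hs t) by ring,
      ← Real.rpow_add_one (hhpos t).ne', hδs,
      show δ * φ * (1/φ) = δ by field_simp,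
      show (1/φ - 1) + 1 = 1/φ by ring]
  · intro t
    rw [T5 t, Real.div_rpow (mul_nonneg (hhpos t).le (hupos t).le) (hkpos t).le,
      Real.mul_rpow (hhpos t).le (hupos t).le, hsh,
      ← Real.rpow_mul (hhpos' t).le, hφβ,
      show β - 1 = -(1 - β) by ring, Real.rpow_neg (hkpos t).le]
    have hk1 : (0:ℝ) < k t ^ (1 - β) := Real.rpow_pos_of_pos (hkpos t) _
    field_simp
  · intro t
    set p : ℝ := (1/φ) * (φ - 1) with hp
    have hμfun : μ = fun x => φ * (mus x * hs x ^ p) := funext fun s => by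
      rw [hμ, hh, ← Real.rpow_mul (hhpos s).le, mul_assoc]
    have hd : HasDerivAt (fun x => mus x * hs x ^ p)
        (deriv mus t * hs t ^ p
          + mus t * (deriv hs t * p * hs t ^ (p - 1))) t :=
      (hmd t).hasDerivAt.mul ((hhd t).hasDerivAt.rpow_const (Or.inl (hhpos t).ne'))
    have hd2 : HasDerivAt μ
        (φ * (deriv mus t * hs t ^ p
          + mus t * (deriv hs t * p * hs t ^ (p - 1)))) t := by
      rw [hμfun]; exact hd.const_mul φ
    rw [hd2.deriv, T6 t, T4 t, hμfun]
    simp only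
    rw [show δs * (1 - u t) * hs t * p * hs t ^ (p - 1)
        = δs * (1 - u t) * p * (hs t ^ (p - 1) * hs t) by ring,
      ← Real.rpow_add_one (hhpos t).ne', show (p - 1) + 1 = p by ring]
    have hpδ : δs * p = (φ - 1) * δ := by
      rw [hδs, hp]; field_simp
    have hθδ : (φ - 1) * δ * (1 - β) = θ * δ := by
      rw [← hφ1]; ring
    have hne : (1 - β) ≠ 0 := ne_of_gt h1β
    have h3 : φ * (mus t * hs t ^ p) * θ * δ / (1 - β) * u t
        = φ * (mus t * hs t ^ p) * (φ - 1) * δ * u t := by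
      rw [← hφ1]; field_simp
    rw [h3]
    linear_combination (φ * (mus t * hs t ^ p) * (1 - u t)) * hpδ
      - (φ * (mus t * hs t ^ p)) * hδs
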